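/- Let (Ω, 𝓕, P) be a probability space, let ρ : Ω → ℝ be measurable with ρ > 0 P-almost surely and ∫ ρ dP = 1, and let Q be the probability measure on (Ω, 𝓕) with density ρ with respect to P. Let r > 1 with conjugate exponent q = r/(r − 1), and let D > 0 be a constant such that (∫ ρ^r dP)^{1/r} ≤ D and (∫ ρ^{−r} dQ)^{1/r} ≤ D. Then for every nonnegative measurable function X : Ω → ℝ one has ∫ X dP ≤ D^{(1+q)/q} · (∫ X^{q²} dP)^{1/q²}. -/

import Mathlib

open MeasureTheory
open scoped ENNReal

/-- reverse-Hölder type estimate. Let `(Ω, 𝓕, P)` be a probability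
space, `ρ > 0` a.s. measurable with `∫ ρ dP = 1`, and let `Q` be the probability measure
with density `ρ` with respect to `P`. Let `r > 1` with conjugate exponent `q = r/(r−1)`,
and `D > 0` with `(∫ ρ^r dP)^{1/r} ≤ D` and `(∫ ρ^{−r} dQ)^{1/r} ≤ D`. Then for every
nonnegative measurable `X : Ω → ℝ`,
`∫ X dP ≤ D^{(1+q)/q} · (∫ X^{q²} dP)^{1/q²}`, the inequality being understood in `[0,∞]`. -/
theorem stmt_10 {Ω : Type*} [MeasurableSpace Ω] (P : Measure Ω) [IsProbabilityMeasure P]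
    (ρ : Ω → ℝ) (hρmeas : Measurable ρ) (hρpos : ∀ᵐ ω ∂P, 0 < ρ ω)
    (hρint : ∫ ω, ρ ω ∂P = 1)
    (Q : Measure Ω) (hQ : Q = P.withDensity fun ω => ENNReal.ofReal (ρ ω))
    (r q D : ℝ) (hr : 1 < r) (hq : q = r / (r - 1)) (hD : 0 < D)
    (hρr : (∫⁻ ω, ENNReal.ofReal (ρ ω ^ r) ∂P) ^ (1 / r) ≤ ENNReal.ofReal D)
    (hρrinv : (∫⁻ ω, ENNReal.ofReal (ρ ω ^ (-r)) ∂Q) ^ (1 / r) ≤ ENNReal.ofReal D)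
    (X : Ω → ℝ) (hXmeas : Measurable X) (hXnn : ∀ ω, 0 ≤ X ω) :
    ∫⁻ ω, ENNReal.ofReal (X ω) ∂P ≤
      ENNReal.ofReal (D ^ ((1 + q) / q)) *
        (∫⁻ ω, ENNReal.ofReal (X ω ^ (q ^ 2)) ∂P) ^ (1 / q ^ 2) := by

  have hr0 : (0:ℝ) < r := lt_trans one_pos hr
  have hq1 : 1 < q := by
    rw [hq, lt_div_iff₀ (by linarith)]; linarith
  have hq0 : (0:ℝ) < q := lt_trans one_pos hq1
  have hrq : r.HolderConjugate q := by
    rw [hq]; exact Real.HolderConjugate.conjExponent hr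
  set f : Ω → ℝ≥0∞ := fun ω => ENNReal.ofReal (X ω) with hf_def
  set g : Ω → ℝ≥0∞ := fun ω => ENNReal.ofReal (ρ ω) with hg_def
  have hf : Measurable f := hXmeas.ennreal_ofReal
  have hg : Measurable g := hρmeas.ennreal_ofReal
  have hfq : Measurable fun ω => f ω ^ q := hf.pow_const q
  have hQP : Q ≪ P := by rw [hQ]; exact withDensity_absolutelyContinuous _ _
  have hρposQ : ∀ᵐ ω ∂Q, 0 < ρ ω := hQP.ae_le hρpos
  -- Step A: change of measure
  have hA : ∫⁻ ω, f ω ∂P = ∫⁻ ω, (g ω)⁻¹ * f ω ∂Q := by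
    rw [hQ, lintegral_withDensity_eq_lintegral_mul _ hρmeas.ennreal_ofReal
      (show Measurable (fun ω => (g ω)⁻¹ * f ω) from hg.inv.mul hf)]
    refine (lintegral_congr_ae ?_).symm
    filter_upwards [hρpos] with ω hω
    have h0 : g ω ≠ 0 := (ENNReal.ofReal_pos.2 hω).ne'
    have htop : g ω ≠ ∞ := ENNReal.ofReal_ne_top
    show g ω * ((g ω)⁻¹ * f ω) = f ω
    rw [← mul_assoc, ENNReal.mul_inv_cancel h0 htop, one_mul]
  -- Step B: Hölder under Q
  have hB : ∫⁻ ω, (g ω)⁻¹ * f ω ∂Q ≤ ENNReal.ofReal D * (∫⁻ ω, f ω ^ q ∂Q) ^ (1/q) := by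
    calc ∫⁻ ω, (g ω)⁻¹ * f ω ∂Q
        ≤ (∫⁻ ω, (g ω)⁻¹ ^ r ∂Q) ^ (1/r) * (∫⁻ ω, f ω ^ q ∂Q) ^ (1/q) :=
          ENNReal.lintegral_mul_le_Lp_mul_Lq Q hrq hg.inv.aemeasurable hf.aemeasurable
      _ ≤ ENNReal.ofReal D * (∫⁻ ω, f ω ^ q ∂Q) ^ (1/q) := by
          refine mul_le_mul' ?_ le_rfl
          have heq : ∫⁻ ω, (g ω)⁻¹ ^ r ∂Q = ∫⁻ ω, ENNReal.ofReal (ρ ω ^ (-r)) ∂Q := by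
            refine lintegral_congr_ae ?_
            filter_upwards [hρposQ] with ω hω
            rw [← ENNReal.ofReal_rpow_of_pos hω, ENNReal.rpow_neg, ← ENNReal.inv_rpow]
          rw [heq]; exact hρrinv
  -- change of measure for f^q
  have hCeq : ∫⁻ ω, f ω ^ q ∂Q = ∫⁻ ω, g ω * f ω ^ q ∂P := by
    rw [hQ, lintegral_withDensity_eq_lintegral_mul _ hρmeas.ennreal_ofReal hfq]
    rfl
  -- Step C: Hölder under P
  have hC : ∫⁻ ω, g ω * f ω ^ q ∂P ≤ ENNReal.ofReal D * (∫⁻ ω, f ω ^ (q^2) ∂P) ^ (1/q) := by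
    calc ∫⁻ ω, g ω * f ω ^ q ∂P
        ≤ (∫⁻ ω, g ω ^ r ∂P) ^ (1/r) * (∫⁻ ω, (f ω ^ q) ^ q ∂P) ^ (1/q) :=
          ENNReal.lintegral_mul_le_Lp_mul_Lq P hrq hg.aemeasurable hfq.aemeasurable
      _ ≤ ENNReal.ofReal D * (∫⁻ ω, f ω ^ (q^2) ∂P) ^ (1/q) := by
          refine mul_le_mul' ?_ (le_of_eq ?_)
          · have heq : ∫⁻ ω, g ω ^ r ∂P = ∫⁻ ω, ENNReal.ofReal (ρ ω ^ r) ∂P := by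
              refine lintegral_congr_ae ?_
              filter_upwards [hρpos] with ω hω
              rw [← ENNReal.ofReal_rpow_of_pos hω]
            rw [heq]; exact hρr
          · rw [lintegral_congr (g := fun ω => f ω ^ (q^2)) fun ω => by
              rw [← ENNReal.rpow_mul, ← sq]]
  -- rewrite the goal integrand
  have hgoal : ∫⁻ ω, ENNReal.ofReal (X ω ^ (q^2)) ∂P = ∫⁻ ω, f ω ^ (q^2) ∂P := by
    refine lintegral_congr fun ω => ?_
    rw [ENNReal.ofReal_rpow_of_nonneg (hXnn ω) (by positivity)]
  rw [hgoal]
  have hqinv : (0:ℝ) ≤ 1/q := by positivity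
  calc ∫⁻ ω, f ω ∂P = ∫⁻ ω, (g ω)⁻¹ * f ω ∂Q := hA
    _ ≤ ENNReal.ofReal D * (∫⁻ ω, f ω ^ q ∂Q) ^ (1/q) := hB
    _ = ENNReal.ofReal D * (∫⁻ ω, g ω * f ω ^ q ∂P) ^ (1/q) := by rw [hCeq]
    _ ≤ ENNReal.ofReal D *
          (ENNReal.ofReal D * (∫⁻ ω, f ω ^ (q^2) ∂P) ^ (1/q)) ^ (1/q) :=
        mul_le_mul' le_rfl (ENNReal.rpow_le_rpow hC hqinv)
    _ = ENNReal.ofReal (D ^ ((1 + q) / q)) * (∫⁻ ω, f ω ^ (q^2) ∂P) ^ (1/q^2) := by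
        rw [ENNReal.mul_rpow_of_nonneg _ _ hqinv, ← ENNReal.rpow_mul, ← mul_assoc]
        congr 1
        · rw [ENNReal.ofReal_rpow_of_pos hD, ← ENNReal.ofReal_mul hD.le]
          congr 1
          rw [← Real.rpow_one_add' hD.le (by positivity)]
          · congr 1
            field_simp
            ring
        · congr 1
          rw [sq]
          ring
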